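/- Let p, q, r > 0 and let Y1 ~ B_I(p+r, q+r), Y2 ~ B_I(p, q+r), Y3 ~ B_I(r, q) be independent. Set (A, B) = ( -(1-Y2)·Y3 , Y2 + (1-Y2)·Y3 ). Then R := Y1 solves the stochastic fixed-point equation R =(in distribution)= A·R' + B, where R' is an independent copy of R independent of (A, B); i.e., if R' is independent of (A, B) and distributed as B_I(p+r, q+r), then A·R' + B is also distributed as B_I(p+r, q+r). -/

import Mathlib

open MeasureTheory ProbabilityTheory Set

/-- The Euler beta function `B(a,b) = Γ(a)Γ(b)/Γ(a+b)`. -/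
noncomputable def eulerBeta (a b : ℝ) : ℝ := Real.Gamma a * Real.Gamma b / Real.Gamma (a + b)

/-- The univariate beta distribution `B_I(a,b)` on `(0,1)`. -/
noncomputable def betaMeasureI (a b : ℝ) : Measure ℝ :=
  MeasureTheory.volume.withDensity fun x =>
    ENNReal.ofReal ((Set.Ioo (0:ℝ) 1).indicator
      (fun x => x ^ (a - 1) * (1 - x) ^ (b - 1) / eulerBeta a b) x)


open scoped ENNReal NNReal

noncomputable def poch (a : ℝ) (n : ℕ) : ℝ := ∏ i ∈ Finset.range n, (a + i)

lemma poch_zero (a : ℝ) : poch a 0 = 1 := by simp [poch]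

lemma poch_succ (a : ℝ) (n : ℕ) : poch a (n+1) = poch a n * (a + n) := by
  simp [poch, Finset.prod_range_succ]

lemma poch_succ' (a : ℝ) (n : ℕ) : poch a (n+1) = a * poch (a+1) n := by
  rw [poch, Finset.prod_range_succ']
  simp only [Nat.cast_zero, add_zero, mul_comm]
  congr 1
  apply Finset.prod_congr rfl
  intro i _
  push_cast; ring

lemma poch_pos {a : ℝ} (ha : 0 < a) (n : ℕ) : 0 < poch a n := by
  apply Finset.prod_pos; intro i _; positivity

lemma chu : ∀ (n : ℕ) (r c : ℝ), 0 < c →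
    ∑ k ∈ Finset.range (n+1), (-1:ℝ)^k * (n.choose k) * (poch r k / poch c k)
      = poch (c - r) n / poch c n := by
  intro n
  induction n with
  | zero => intro r c hc; simp [poch_zero]
  | succ n ih =>
    intro r c hc
    have hcn : poch c n ≠ 0 := (poch_pos hc n).ne'
    have hcn1 : poch (c+1) n ≠ 0 := (poch_pos (by linarith) n).ne'
    have hc0 : c ≠ 0 := hc.ne'
    -- step 1: recurrence
    have key : ∑ k ∈ Finset.range (n+2), (-1:ℝ)^k * ((n+1).choose k) * (poch r k / poch c k)
        = (∑ k ∈ Finset.range (n+1), (-1:ℝ)^k * (n.choose k) * (poch r k / poch c k))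
          - (r/c) * ∑ k ∈ Finset.range (n+1), (-1:ℝ)^k * (n.choose k) * (poch (r+1) k / poch (c+1) k) := by
      rw [Finset.sum_range_succ' (fun k => (-1:ℝ)^k * ((n+1).choose k) * (poch r k / poch c k)) (n+1)]
      have split : ∀ k ∈ Finset.range (n+1),
          (-1:ℝ)^(k+1) * ((n+1).choose (k+1)) * (poch r (k+1) / poch c (k+1))
          = (-1:ℝ)^(k+1) * (n.choose k) * (poch r (k+1) / poch c (k+1))
            + (-1:ℝ)^(k+1) * (n.choose (k+1)) * (poch r (k+1) / poch c (k+1)) := by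
        intro k _
        rw [Nat.choose_succ_succ]
        push_cast
        ring
      rw [Finset.sum_congr rfl split, Finset.sum_add_distrib]
      have e1 : ∑ k ∈ Finset.range (n+1),
          (-1:ℝ)^(k+1) * (n.choose k) * (poch r (k+1) / poch c (k+1))
          = -(r/c) * ∑ k ∈ Finset.range (n+1), (-1:ℝ)^k * (n.choose k) * (poch (r+1) k / poch (c+1) k) := by
        rw [Finset.mul_sum]
        apply Finset.sum_congr rfl
        intro k _
        rw [poch_succ', poch_succ']
        have : poch (c+1) k ≠ 0 := (poch_pos (by linarith) k).ne'
        field_simp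
        ring
      have e2 : ∑ k ∈ Finset.range (n+1),
          (-1:ℝ)^(k+1) * (n.choose (k+1)) * (poch r (k+1) / poch c (k+1))
          = (∑ k ∈ Finset.range (n+1), (-1:ℝ)^k * (n.choose k) * (poch r k / poch c k)) - 1 := by
        have := Finset.sum_range_succ' (fun k => (-1:ℝ)^k * (n.choose k) * (poch r k / poch c k)) n
        have h0 : ((-1:ℝ)^0 * (n.choose 0) * (poch r 0 / poch c 0)) = 1 := by
          simp [poch_zero]
        rw [h0] at this
        have hlast : (-1:ℝ)^(n+1) * (n.choose (n+1)) * (poch r (n+1) / poch c (n+1)) = 0 := by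
          simp [Nat.choose_succ_self]
        calc ∑ k ∈ Finset.range (n+1), (-1:ℝ)^(k+1) * (n.choose (k+1)) * (poch r (k+1) / poch c (k+1))
            = (∑ k ∈ Finset.range n, (-1:ℝ)^(k+1) * (n.choose (k+1)) * (poch r (k+1) / poch c (k+1)))
              + (-1:ℝ)^(n+1) * (n.choose (n+1)) * (poch r (n+1) / poch c (n+1)) := Finset.sum_range_succ _ n
          _ = ∑ k ∈ Finset.range n, (-1:ℝ)^(k+1) * (n.choose (k+1)) * (poch r (k+1) / poch c (k+1)) := by
              rw [hlast, add_zero]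
          _ = (∑ k ∈ Finset.range (n+1), (-1:ℝ)^k * (n.choose k) * (poch r k / poch c k)) - 1 := by
              rw [this]; ring
      rw [e1, e2]
      simp [poch_zero]
      ring
    rw [key, ih r c hc, ih (r+1) (c+1) (by linarith)]
    have hsub : c + 1 - (r + 1) = c - r := by ring
    rw [hsub]
    rw [poch_succ (c-r) n, poch_succ c n]
    have h1 : poch c (n+1) = c * poch (c+1) n := poch_succ' c n
    have h2 : poch c (n+1) = poch c n * (c + n) := poch_succ c n
    have hcn2 : (c : ℝ) + n ≠ 0 := by positivity
    have h3 : poch (c+1) n = poch c n * (c + n) / c := by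
      rw [eq_div_iff hc0]; rw [h1] at h2; linarith [h2]
    rw [h3]
    field_simp
    ring

lemma eulerBeta_pos {a b : ℝ} (ha : 0 < a) (hb : 0 < b) : 0 < eulerBeta a b := by
  unfold eulerBeta
  have := Real.Gamma_pos_of_pos ha
  have := Real.Gamma_pos_of_pos hb
  have := Real.Gamma_pos_of_pos (add_pos ha hb)
  positivity

lemma betaKernel_integrableOn {a b : ℝ} (ha : 0 < a) (hb : 0 < b) :
    IntegrableOn (fun x : ℝ => x ^ (a-1) * (1-x) ^ (b-1)) (Set.Ioo 0 1) := by
  have h := Complex.betaIntegral_convergent (u := (a:ℂ)) (v := (b:ℂ)) (by simpa) (by simpa)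
  rw [intervalIntegrable_iff_integrableOn_Ioc_of_le zero_le_one] at h
  have h2 : IntegrableOn (fun x : ℝ => (x:ℂ) ^ ((a:ℂ)-1) * (1-(x:ℂ)) ^ ((b:ℂ)-1)) (Set.Ioo 0 1) :=
    h.mono_set Set.Ioo_subset_Ioc_self
  have h3 : IntegrableOn (fun x : ℝ => ((x:ℂ) ^ ((a:ℂ)-1) * (1-(x:ℂ)) ^ ((b:ℂ)-1)).re) (Set.Ioo 0 1) := h2.re
  apply h3.congr_fun _ measurableSet_Ioo
  intro x hx
  have hx0 : (0:ℝ) ≤ x := hx.1.le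
  have hx1 : (0:ℝ) ≤ 1 - x := by linarith [hx.2]
  have e1 : (x:ℂ) ^ ((a:ℂ)-1) = ((x ^ (a-1) : ℝ) : ℂ) := by
    rw [show ((a:ℂ)-1) = (((a-1:ℝ)):ℂ) by push_cast; ring, ← Complex.ofReal_cpow hx0]
  have e2 : ((1:ℂ)-(x:ℂ)) ^ ((b:ℂ)-1) = (((1-x) ^ (b-1) : ℝ) : ℂ) := by
    rw [show ((1:ℂ)-(x:ℂ)) = (((1-x):ℝ):ℂ) by push_cast; ring,
      show ((b:ℂ)-1) = (((b-1:ℝ)):ℂ) by push_cast; ring, ← Complex.ofReal_cpow hx1]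
  simp only [e1, e2, ← Complex.ofReal_mul, Complex.ofReal_re]

lemma betaIntegral_real {a b : ℝ} (ha : 0 < a) (hb : 0 < b) :
    ∫ x in Set.Ioo (0:ℝ) 1, x ^ (a-1) * (1-x) ^ (b-1) = eulerBeta a b := by
  have key := Complex.Gamma_mul_Gamma_eq_betaIntegral (s := (a:ℂ)) (t := (b:ℂ)) (by simpa) (by simpa)
  have hBeta : Complex.betaIntegral a b
      = ((∫ x in Set.Ioo (0:ℝ) 1, x ^ (a-1) * (1-x) ^ (b-1) : ℝ) : ℂ) := by
    rw [Complex.betaIntegral, intervalIntegral.integral_of_le zero_le_one,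
      ← MeasureTheory.integral_Ioc_eq_integral_Ioo (f := fun x : ℝ => x ^ (a-1) * (1-x) ^ (b-1))]
    rw [show (∫ x in Set.Ioc (0:ℝ) 1, (x:ℂ) ^ ((a:ℂ)-1) * (1-(x:ℂ)) ^ ((b:ℂ)-1))
        = ∫ x in Set.Ioc (0:ℝ) 1, ((x ^ (a-1) * (1-x) ^ (b-1) : ℝ) : ℂ) from ?_]
    · exact integral_ofReal
    · apply setIntegral_congr_ae measurableSet_Ioc
      filter_upwards [] with x hx
      have hx0 : (0:ℝ) ≤ x := hx.1.le
      have hx1 : (0:ℝ) ≤ 1 - x := by linarith [hx.2]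
      have e1 : (x:ℂ) ^ ((a:ℂ)-1) = ((x ^ (a-1) : ℝ) : ℂ) := by
        rw [show ((a:ℂ)-1) = (((a-1:ℝ)):ℂ) by push_cast; ring, ← Complex.ofReal_cpow hx0]
      have e2 : ((1:ℂ)-(x:ℂ)) ^ ((b:ℂ)-1) = (((1-x) ^ (b-1) : ℝ) : ℂ) := by
        rw [show ((1:ℂ)-(x:ℂ)) = (((1-x):ℝ):ℂ) by push_cast; ring,
          show ((b:ℂ)-1) = (((b-1:ℝ)):ℂ) by push_cast; ring, ← Complex.ofReal_cpow hx1]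
      rw [e1, e2, ← Complex.ofReal_mul]
  rw [hBeta] at key
  have hab : Complex.Gamma ((a:ℂ) + (b:ℂ)) ≠ 0 := by
    rw [show ((a:ℂ) + (b:ℂ)) = (((a+b):ℝ):ℂ) by push_cast; ring, Complex.Gamma_ofReal]
    exact_mod_cast (Real.Gamma_pos_of_pos (add_pos ha hb)).ne'
  have := key
  rw [Complex.Gamma_ofReal, Complex.Gamma_ofReal] at this
  rw [show ((a:ℂ) + (b:ℂ)) = (((a+b):ℝ):ℂ) by push_cast; ring, Complex.Gamma_ofReal] at this
  have : ((Real.Gamma a * Real.Gamma b : ℝ) : ℂ)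
      = ((Real.Gamma (a+b) * ∫ x in Set.Ioo (0:ℝ) 1, x ^ (a-1) * (1-x) ^ (b-1) : ℝ) : ℂ) := by
    push_cast; rw [this]
  have h := Complex.ofReal_injective this
  unfold eulerBeta
  have hG : Real.Gamma (a+b) ≠ 0 := (Real.Gamma_pos_of_pos (add_pos ha hb)).ne'
  field_simp
  linarith [h]

/-- The density of the beta measure, as a real function. -/
noncomputable def betaDens (a b : ℝ) : ℝ → ℝ :=
  (Set.Ioo (0:ℝ) 1).indicator (fun x => x ^ (a - 1) * (1 - x) ^ (b - 1) / eulerBeta a b)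

lemma betaDens_nonneg {a b : ℝ} (ha : 0 < a) (hb : 0 < b) (x : ℝ) : 0 ≤ betaDens a b x := by
  unfold betaDens
  apply Set.indicator_nonneg
  intro y hy
  have h1 : (0:ℝ) ≤ y ^ (a-1) := Real.rpow_nonneg hy.1.le _
  have h2 : (0:ℝ) ≤ (1-y) ^ (b-1) := Real.rpow_nonneg (by linarith [hy.2]) _
  have := (eulerBeta_pos ha hb).le
  positivity

lemma betaDens_measurable (a b : ℝ) : Measurable (betaDens a b) := by
  unfold betaDens
  apply Measurable.indicator _ measurableSet_Ioo
  apply Measurable.div_const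
  have h1 : Measurable (fun x : ℝ => x ^ (a-1)) := by measurability
  have h2 : Measurable (fun x : ℝ => (1-x) ^ (b-1)) := by
    have : (fun x : ℝ => (1-x) ^ (b-1)) = (fun y : ℝ => y ^ (b-1)) ∘ (fun x : ℝ => 1 - x) := rfl
    rw [this]
    exact Measurable.comp (by measurability) (measurable_const.sub measurable_id)
  exact h1.mul h2

lemma betaMeasure_eq (a b : ℝ) :
    betaMeasureI a b = MeasureTheory.volume.withDensity
      (fun x => ((betaDens a b x).toNNReal : ℝ≥0∞)) := rfl

lemma betaDens_integrable {a b : ℝ} (ha : 0 < a) (hb : 0 < b) :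
    Integrable (betaDens a b) := by
  unfold betaDens
  rw [integrable_indicator_iff measurableSet_Ioo]
  exact (betaKernel_integrableOn ha hb).div_const _

lemma betaDens_integral {a b : ℝ} (ha : 0 < a) (hb : 0 < b) :
    ∫ x, betaDens a b x = 1 := by
  unfold betaDens
  rw [integral_indicator measurableSet_Ioo]
  rw [show (fun x : ℝ => x ^ (a-1) * (1-x) ^ (b-1) / eulerBeta a b)
    = fun x : ℝ => (x ^ (a-1) * (1-x) ^ (b-1)) * (eulerBeta a b)⁻¹ by funext x; ring]
  rw [integral_mul_const, betaIntegral_real ha hb]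
  field_simp [(eulerBeta_pos ha hb).ne']

instance : ∀ (a b : ℝ), SFinite (betaMeasureI a b) := by
  intro a b; rw [betaMeasure_eq]; infer_instance

lemma betaMeasure_isProb {a b : ℝ} (ha : 0 < a) (hb : 0 < b) :
    IsProbabilityMeasure (betaMeasureI a b) := by
  constructor
  rw [betaMeasure_eq, withDensity_apply _ MeasurableSet.univ, Measure.restrict_univ]
  have : ∫⁻ x, ((betaDens a b x).toNNReal : ℝ≥0∞) = ENNReal.ofReal (∫ x, betaDens a b x) := by
    rw [MeasureTheory.ofReal_integral_eq_lintegral_ofReal (betaDens_integrable ha hb)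
      (Filter.Eventually.of_forall (betaDens_nonneg ha hb))]
    rfl
  rw [this, betaDens_integral ha hb, ENNReal.ofReal_one]

lemma betaMeasure_compl_Ioo {a b : ℝ} : betaMeasureI a b ((Set.Ioo (0:ℝ) 1)ᶜ) = 0 := by
  rw [betaMeasure_eq, withDensity_apply _ measurableSet_Ioo.compl]
  rw [setLIntegral_congr_fun measurableSet_Ioo.compl
    (fun x hx => ?_), lintegral_zero]
  have : betaDens a b x = 0 := by
    unfold betaDens; exact Set.indicator_of_notMem hx _
  simp [this]

lemma betaMeasure_compl_Icc {a b : ℝ} : betaMeasureI a b ((Set.Icc (0:ℝ) 1)ᶜ) = 0 :=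
  measure_mono_null (Set.compl_subset_compl.2 Set.Ioo_subset_Icc_self) betaMeasure_compl_Ioo

lemma integral_betaMeasure {a b : ℝ} (ha : 0 < a) (hb : 0 < b) (f : ℝ → ℝ) :
    ∫ t, f t ∂(betaMeasureI a b)
      = ∫ t in Set.Ioo (0:ℝ) 1, (t ^ (a-1) * (1-t) ^ (b-1) / eulerBeta a b) * f t := by
  rw [betaMeasure_eq, integral_withDensity_eq_integral_smul
    ((betaDens_measurable a b).real_toNNReal) f]
  have : (fun t => (betaDens a b t).toNNReal • f t)
      = (Set.Ioo (0:ℝ) 1).indicator (fun t => (t ^ (a-1) * (1-t) ^ (b-1) / eulerBeta a b) * f t) := by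
    funext t
    rw [NNReal.smul_def, smul_eq_mul, Real.coe_toNNReal _ (betaDens_nonneg ha hb t)]
    unfold betaDens
    by_cases ht : t ∈ Set.Ioo (0:ℝ) 1
    · rw [Set.indicator_of_mem ht, Set.indicator_of_mem ht]
    · rw [Set.indicator_of_notMem ht, Set.indicator_of_notMem ht, zero_mul]
  rw [this, integral_indicator measurableSet_Ioo]

lemma betaMoment {a b : ℝ} (ha : 0 < a) (hb : 0 < b) (m n : ℕ) :
    ∫ t, t ^ m * (1-t) ^ n ∂(betaMeasureI a b)
      = eulerBeta (a + m) (b + n) / eulerBeta a b := by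
  rw [integral_betaMeasure ha hb]
  have key : ∀ t ∈ Set.Ioo (0:ℝ) 1,
      (t ^ (a-1) * (1-t) ^ (b-1) / eulerBeta a b) * (t ^ m * (1-t) ^ n)
        = (t ^ (a + m - 1) * (1-t) ^ (b + n - 1)) * (eulerBeta a b)⁻¹ := by
    intro t ht
    have ht0 : (0:ℝ) < t := ht.1
    have ht1 : (0:ℝ) < 1 - t := by linarith [ht.2]
    rw [show (t:ℝ) ^ m = t ^ (m:ℝ) from (Real.rpow_natCast t m).symm,
      show (1-t) ^ n = (1-t) ^ (n:ℝ) from (Real.rpow_natCast _ n).symm]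
    rw [div_eq_mul_inv]
    rw [show t ^ (a+m-1) = t ^ (a-1) * t ^ (m:ℝ) by
      rw [← Real.rpow_add ht0]; ring_nf,
      show (1-t) ^ (b+n-1) = (1-t) ^ (b-1) * (1-t) ^ (n:ℝ) by
      rw [← Real.rpow_add ht1]; ring_nf]
    ring
  rw [setIntegral_congr_fun measurableSet_Ioo key, integral_mul_const,
    betaIntegral_real (by positivity) (by positivity), div_eq_mul_inv]

lemma Gamma_poch {a : ℝ} (ha : 0 < a) (n : ℕ) :
    Real.Gamma (a + n) = poch a n * Real.Gamma a := by
  induction n with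
  | zero => simp [poch]
  | succ n ih =>
    have : a + ((n+1 : ℕ) : ℝ) = (a + n) + 1 := by push_cast; ring
    rw [this, Real.Gamma_add_one (by positivity), ih, poch_succ]
    ring

lemma betaMoment_pow {a b : ℝ} (ha : 0 < a) (hb : 0 < b) (m : ℕ) :
    ∫ t, t ^ m ∂(betaMeasureI a b) = poch a m / poch (a+b) m := by
  have h : ∫ t, t ^ m ∂(betaMeasureI a b) = ∫ t, t ^ m * (1-t) ^ 0 ∂(betaMeasureI a b) := by
    simp
  rw [h, betaMoment ha hb m 0]
  unfold eulerBeta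
  have e1 : Real.Gamma (a + m) = poch a m * Real.Gamma a := Gamma_poch ha m
  have e2 : a + m + (b + (0:ℕ)) = (a + b) + m := by push_cast; ring
  have e3 : Real.Gamma ((a+b) + m) = poch (a+b) m * Real.Gamma (a+b) :=
    Gamma_poch (by positivity) m
  rw [e2, e1, e3]
  have g1 := (Real.Gamma_pos_of_pos ha).ne'
  have g2 := (Real.Gamma_pos_of_pos hb).ne'
  have g3 := (Real.Gamma_pos_of_pos (show (0:ℝ) < a + b by positivity)).ne'
  have g4 := (poch_pos (show (0:ℝ) < a + b by positivity) m).ne'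
  push_cast
  field_simp
  ring

lemma betaMoment_one_sub_pow {a b : ℝ} (ha : 0 < a) (hb : 0 < b) (n : ℕ) :
    ∫ t, (1-t) ^ n ∂(betaMeasureI a b) = poch b n / poch (a+b) n := by
  have h : ∫ t, (1-t) ^ n ∂(betaMeasureI a b) = ∫ t, t ^ 0 * (1-t) ^ n ∂(betaMeasureI a b) := by
    simp
  rw [h, betaMoment ha hb 0 n]
  unfold eulerBeta
  have e1 : Real.Gamma (b + n) = poch b n * Real.Gamma b := Gamma_poch hb n
  have e2 : a + (0:ℕ) + (b + n) = (a + b) + n := by push_cast; ring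
  have e3 : Real.Gamma ((a+b) + n) = poch (a+b) n * Real.Gamma (a+b) :=
    Gamma_poch (by positivity) n
  rw [e2, e1, e3]
  have g1 := (Real.Gamma_pos_of_pos ha).ne'
  have g2 := (Real.Gamma_pos_of_pos hb).ne'
  have g3 := (Real.Gamma_pos_of_pos (show (0:ℝ) < a + b by positivity)).ne'
  have g4 := (poch_pos (show (0:ℝ) < a + b by positivity) n).ne'
  push_cast
  field_simp
  ring

lemma integrable_pow_of_supported {μ : Measure ℝ} [IsFiniteMeasure μ]
    (hμ : μ ((Set.Icc (0:ℝ) 1)ᶜ) = 0) (n : ℕ) :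
    Integrable (fun x : ℝ => x ^ n) μ := by
  have hae : ∀ᵐ x ∂μ, x ∈ Set.Icc (0:ℝ) 1 := by
    rw [MeasureTheory.ae_iff]
    exact measure_mono_null (fun x hx => hx) hμ
  apply Integrable.mono' (integrable_const (1:ℝ))
  · exact (continuous_pow n).aestronglyMeasurable
  · filter_upwards [hae] with x hx
    rw [Real.norm_eq_abs, abs_pow]
    apply pow_le_one₀ (abs_nonneg x)
    rw [abs_le]; exact ⟨by linarith [hx.1], hx.2⟩

lemma integral_polynomial_eq {μ ν : Measure ℝ} [IsFiniteMeasure μ] [IsFiniteMeasure ν]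
    (hμ : μ ((Set.Icc (0:ℝ) 1)ᶜ) = 0) (hν : ν ((Set.Icc (0:ℝ) 1)ᶜ) = 0)
    (h : ∀ n : ℕ, ∫ x, x ^ n ∂μ = ∫ x, x ^ n ∂ν) (p : Polynomial ℝ) :
    ∫ x, p.eval x ∂μ = ∫ x, p.eval x ∂ν := by
  have hev : ∀ x : ℝ, p.eval x = ∑ i ∈ Finset.range (p.natDegree + 1), p.coeff i * x ^ i :=
    fun x => by rw [Polynomial.eval_eq_sum_range]
  calc ∫ x, p.eval x ∂μ
      = ∫ x, ∑ i ∈ Finset.range (p.natDegree + 1), p.coeff i * x ^ i ∂μ := by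
        simp_rw [hev]
    _ = ∑ i ∈ Finset.range (p.natDegree + 1), ∫ x, p.coeff i * x ^ i ∂μ := by
        apply integral_finset_sum
        intro i _
        exact (integrable_pow_of_supported hμ i).const_mul _
    _ = ∑ i ∈ Finset.range (p.natDegree + 1), ∫ x, p.coeff i * x ^ i ∂ν := by
        apply Finset.sum_congr rfl
        intro i _
        rw [integral_const_mul, integral_const_mul, h i]
    _ = ∫ x, ∑ i ∈ Finset.range (p.natDegree + 1), p.coeff i * x ^ i ∂ν := by
        symm
        apply integral_finset_sum
        intro i _
        exact (integrable_pow_of_supported hν i).const_mul _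
    _ = ∫ x, p.eval x ∂ν := by simp_rw [hev]

lemma moment_ext {μ ν : Measure ℝ} [IsFiniteMeasure μ] [IsFiniteMeasure ν]
    (hμ : μ ((Set.Icc (0:ℝ) 1)ᶜ) = 0) (hν : ν ((Set.Icc (0:ℝ) 1)ᶜ) = 0)
    (h : ∀ n : ℕ, ∫ x, x ^ n ∂μ = ∫ x, x ^ n ∂ν) : μ = ν := by
  have haeμ : ∀ᵐ x ∂μ, x ∈ Set.Icc (0:ℝ) 1 := by
    rw [MeasureTheory.ae_iff]; exact measure_mono_null (fun x hx => hx) hμ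
  have haeν : ∀ᵐ x ∂ν, x ∈ Set.Icc (0:ℝ) 1 := by
    rw [MeasureTheory.ae_iff]; exact measure_mono_null (fun x hx => hx) hν
  have hresμ : μ.restrict (Set.Icc (0:ℝ) 1) = μ := Measure.restrict_eq_self_of_ae_mem haeμ
  have hresν : ν.restrict (Set.Icc (0:ℝ) 1) = ν := Measure.restrict_eq_self_of_ae_mem haeν
  apply ext_of_forall_lintegral_eq_of_IsFiniteMeasure
  intro f
  set g : ℝ → ℝ := fun x => (f x : ℝ) with hg
  have hgc : Continuous g := by
    exact NNReal.continuous_coe.comp f.continuous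
  obtain ⟨Cf, hCf⟩ := f.bounded
  have hgbd : ∀ x : ℝ, ‖g x‖ ≤ Cf + (f 0 : ℝ) := by
    intro x
    have h1 : dist (f x) (f 0) ≤ Cf := hCf x 0
    have h2 : dist (f x) (f 0) = |(f x : ℝ) - (f 0 : ℝ)| := NNReal.dist_eq _ _
    rw [Real.norm_eq_abs]
    have h3 : |(f x : ℝ)| = (f x : ℝ) := abs_of_nonneg (f x).coe_nonneg
    rw [h3]
    have := abs_sub_abs_le_abs_sub ((f x : ℝ)) ((f 0 : ℝ))
    rw [abs_of_nonneg (f x).coe_nonneg, abs_of_nonneg (f 0).coe_nonneg] at this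
    rw [h2] at h1
    linarith
  have hgint : ∀ (κ : Measure ℝ) , IsFiniteMeasure κ → Integrable g κ := by
    intro κ hκ
    apply Integrable.mono' (integrable_const (Cf + (f 0 : ℝ)))
    · exact hgc.aestronglyMeasurable
    · filter_upwards [] with x
      exact hgbd x
  -- key : real integrals agree
  have key : ∫ x, g x ∂μ = ∫ x, g x ∂ν := by
    have main : ∀ ε : ℝ, 0 < ε → |(∫ x, g x ∂μ) - ∫ x, g x ∂ν|
        ≤ ε * ((μ Set.univ).toReal + (ν Set.univ).toReal) := by
      intro ε hε
      obtain ⟨p, hp⟩ := exists_polynomial_near_of_continuousOn 0 1 g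
        (hgc.continuousOn) ε hε
      have hb : ∀ x ∈ Set.Icc (0:ℝ) 1, ‖g x - p.eval x‖ ≤ ε := by
        intro x hx
        have := hp x hx
        rw [Real.norm_eq_abs, abs_sub_comm]
        exact this.le
      have hμs : μ (Set.Icc (0:ℝ) 1) ≠ ⊤ := measure_ne_top μ _
      have hνs : ν (Set.Icc (0:ℝ) 1) ≠ ⊤ := measure_ne_top ν _
      have hpm : ∀ (κ : Measure ℝ), IsFiniteMeasure κ → κ ((Set.Icc (0:ℝ) 1)ᶜ) = 0 →
          Integrable (fun x => p.eval x) κ := by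
        intro κ hκ h0
        have hev : ∀ x : ℝ, p.eval x = ∑ i ∈ Finset.range (p.natDegree + 1), p.coeff i * x ^ i :=
          fun x => by rw [Polynomial.eval_eq_sum_range]
        simp_rw [hev]
        apply integrable_finset_sum
        intro i _
        exact (integrable_pow_of_supported h0 i).const_mul _
      have hμ1 : ‖∫ x in Set.Icc (0:ℝ) 1, (g x - p.eval x) ∂μ‖
          ≤ ε * (μ (Set.Icc (0:ℝ) 1)).toReal := by
        apply norm_setIntegral_le_of_norm_le_const (lt_of_le_of_ne (le_top) hμs)
          (fun x hx => hb x hx)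
      have hν1 : ‖∫ x in Set.Icc (0:ℝ) 1, (g x - p.eval x) ∂ν‖
          ≤ ε * (ν (Set.Icc (0:ℝ) 1)).toReal := by
        apply norm_setIntegral_le_of_norm_le_const (lt_of_le_of_ne (le_top) hνs)
          (fun x hx => hb x hx)
      have hpint : ∫ x, p.eval x ∂μ = ∫ x, p.eval x ∂ν :=
        integral_polynomial_eq hμ hν h p
      have deco : ∀ (κ : Measure ℝ), IsFiniteMeasure κ → κ ((Set.Icc (0:ℝ) 1)ᶜ) = 0 →
          κ.restrict (Set.Icc (0:ℝ) 1) = κ →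
          ∫ x, g x ∂κ = (∫ x in Set.Icc (0:ℝ) 1, (g x - p.eval x) ∂κ) + ∫ x, p.eval x ∂κ := by
        intro κ hκ h0 hres
        have e1 : ∫ x, g x ∂κ = ∫ x in Set.Icc (0:ℝ) 1, g x ∂κ := by
          conv_lhs => rw [← hres]
        have e2 : ∫ x, p.eval x ∂κ = ∫ x in Set.Icc (0:ℝ) 1, p.eval x ∂κ := by
          conv_lhs => rw [← hres]
        rw [e1, e2, integral_sub ((hgint κ hκ).restrict) ((hpm κ hκ h0).restrict)]
        ring
      rw [deco μ inferInstance hμ hresμ, deco ν inferInstance hν hresν, hpint]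
      have trineq : |((∫ x in Set.Icc (0:ℝ) 1, (g x - p.eval x) ∂μ) + ∫ x, p.eval x ∂ν)
          - ((∫ x in Set.Icc (0:ℝ) 1, (g x - p.eval x) ∂ν) + ∫ x, p.eval x ∂ν)|
          ≤ ε * (μ (Set.Icc (0:ℝ) 1)).toReal + ε * (ν (Set.Icc (0:ℝ) 1)).toReal := by
        rw [show ((∫ x in Set.Icc (0:ℝ) 1, (g x - p.eval x) ∂μ) + ∫ x, p.eval x ∂ν)
          - ((∫ x in Set.Icc (0:ℝ) 1, (g x - p.eval x) ∂ν) + ∫ x, p.eval x ∂ν)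
          = (∫ x in Set.Icc (0:ℝ) 1, (g x - p.eval x) ∂μ)
            - (∫ x in Set.Icc (0:ℝ) 1, (g x - p.eval x) ∂ν) by ring]
        calc _ ≤ |∫ x in Set.Icc (0:ℝ) 1, (g x - p.eval x) ∂μ|
              + |∫ x in Set.Icc (0:ℝ) 1, (g x - p.eval x) ∂ν| := abs_sub _ _
        _ ≤ _ := by
            apply add_le_add
            · exact hμ1
            · exact hν1
      apply trineq.trans
      have m1 : (μ (Set.Icc (0:ℝ) 1)).toReal ≤ (μ Set.univ).toReal :=
        ENNReal.toReal_mono (measure_ne_top μ _) (measure_mono (Set.subset_univ _))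
      have m2 : (ν (Set.Icc (0:ℝ) 1)).toReal ≤ (ν Set.univ).toReal :=
        ENNReal.toReal_mono (measure_ne_top ν _) (measure_mono (Set.subset_univ _))
      nlinarith
    set A := (∫ x, g x ∂μ) - ∫ x, g x ∂ν with hA
    set C := (μ Set.univ).toReal + (ν Set.univ).toReal with hC
    have hC0 : 0 ≤ C := by positivity
    have : |A| ≤ 0 := by
      by_contra hcon
      push_neg at hcon
      have h1 := main (|A| / (2*(C + 1))) (by positivity)
      have hpos : (0:ℝ) < 2*(C+1) := by linarith
      have h2 : |A| * (2*(C+1)) ≤ (|A| / (2*(C + 1)) * C) * (2*(C+1)) :=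
        mul_le_mul_of_nonneg_right h1 hpos.le
      have h3 : (|A| / (2*(C + 1)) * C) * (2*(C+1)) = |A| * C := by
        field_simp
      nlinarith
    have : A = 0 := abs_eq_zero.mp (le_antisymm this (abs_nonneg _))
    linarith [this]
  have lhs : ∫⁻ x, (f x : ℝ≥0∞) ∂μ = ENNReal.ofReal (∫ x, g x ∂μ) := by
    rw [← MeasureTheory.lintegral_coe_eq_integral f (hgint μ inferInstance)]
  have rhs : ∫⁻ x, (f x : ℝ≥0∞) ∂ν = ENNReal.ofReal (∫ x, g x ∂ν) := by
    rw [← MeasureTheory.lintegral_coe_eq_integral f (hgint ν inferInstance)]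
  rw [lhs, rhs, key]

set_option maxHeartbeats 1000000 in
/-- The perpetuity equation (5.2): with `(A,B) = (-(1-Y₂)Y₃, Y₂ + (1-Y₂)Y₃)` built from
independent `Y₂ ∼ B_I(p,q+r)` and `Y₃ ∼ B_I(r,q)`, and `R'` independent of `(A,B)` with
`R' ∼ B_I(p+r,q+r)`, the random variable `A·R' + B` is again `B_I(p+r,q+r)`-distributed;
that is, `R ≝ Y₁ ∼ B_I(p+r,q+r)` solves `R =ᵈ A·R + B`. -/
theorem perpetuity_eq_R
    {Ω : Type*} [MeasurableSpace Ω] (μ : Measure Ω) [IsProbabilityMeasure μ]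
    (p q r : ℝ) (hp : 0 < p) (hq : 0 < q) (hr : 0 < r)
    (Y₂ Y₃ R' : Ω → ℝ) (hY₂ : Measurable Y₂) (hY₃ : Measurable Y₃) (hR' : Measurable R')
    (hindep : iIndepFun ![Y₂, Y₃, R'] μ)
    (h2 : Measure.map Y₂ μ = betaMeasureI p (q + r))
    (h3 : Measure.map Y₃ μ = betaMeasureI r q)
    (hR'law : Measure.map R' μ = betaMeasureI (p + r) (q + r)) :
    Measure.map (fun ω =>
        (-((1 - Y₂ ω) * Y₃ ω)) * R' ω + (Y₂ ω + (1 - Y₂ ω) * Y₃ ω)) μ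
      = betaMeasureI (p + r) (q + r) := by
  -- abbreviations
  set W : Ω → ℝ := fun ω => (1 - Y₂ ω) * (1 - Y₃ ω * (1 - R' ω)) with hW
  have hWmeas : Measurable W := by
    apply Measurable.mul
    · exact measurable_const.sub hY₂
    · exact measurable_const.sub (hY₃.mul (measurable_const.sub hR'))
  -- a.s. membership in Ioo
  have hmem : ∀ (Y : Ω → ℝ) (a b : ℝ), Measurable Y → Measure.map Y μ = betaMeasureI a b →
      ∀ᵐ ω ∂μ, Y ω ∈ Set.Ioo (0:ℝ) 1 := by
    intro Y a b hY hlaw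
    rw [MeasureTheory.ae_iff]
    have : {ω | ¬ Y ω ∈ Set.Ioo (0:ℝ) 1} = Y ⁻¹' ((Set.Ioo (0:ℝ) 1)ᶜ) := rfl
    rw [this, ← Measure.map_apply hY measurableSet_Ioo.compl, hlaw]
    exact betaMeasure_compl_Ioo
  have hY₂mem := hmem Y₂ p (q+r) hY₂ h2
  have hY₃mem := hmem Y₃ r q hY₃ h3
  have hR'mem := hmem R' (p+r) (q+r) hR' hR'law
  -- positivity bookkeeping
  have hqr : (0:ℝ) < q + r := by linarith
  have hpr : (0:ℝ) < p + r := by linarith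
  have hpqr : (0:ℝ) < p + (q + r) := by linarith
  have hc : (0:ℝ) < (q + r) + (p + r) := by linarith
  -- Step 1 : moments of W
  have hasm : ∀ (f : Ω → ℝ), Measurable f → AEStronglyMeasurable f μ :=
    fun f hf => hf.aestronglyMeasurable
  -- independence of the two factors of W
  have hpair : IndepFun (fun ω => (Y₃ ω, R' ω)) Y₂ μ := by
    have h := iIndepFun.indepFun_prodMk hindep ?_ 1 2 0 (by decide) (by decide)
    · simpa using h
    · intro i; fin_cases i <;> simpa using ‹_›
  have hY₃R' : IndepFun Y₃ R' μ := by
    have h := hindep.indepFun (i := 1) (j := 2) (by decide)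
    simpa using h
  have moment_W : ∀ n : ℕ, ∫ ω, (W ω) ^ n ∂μ
      = (∑ k ∈ Finset.range (n+1), (-1:ℝ)^k * (n.choose k) *
          ((poch r k / poch (r+q) k) * (poch (q+r) k / poch ((p+r)+(q+r)) k)))
        * (poch (q+r) n / poch (p+(q+r)) n) := by
    intro n
    -- factor the product
    have hsplit : ∀ ω, (W ω) ^ n
        = (1 - Y₃ ω * (1 - R' ω)) ^ n * (1 - Y₂ ω) ^ n := by
      intro ω; rw [hW, ← mul_pow]; congr 1; ring
    simp_rw [hsplit]
    have hindep2 : IndepFun (fun ω => (1 - Y₃ ω * (1 - R' ω)) ^ n)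
        (fun ω => (1 - Y₂ ω) ^ n) μ := by
      have hφ : Measurable (fun v : ℝ × ℝ => (1 - v.1 * (1 - v.2)) ^ n) :=
        (measurable_const.sub (measurable_fst.mul (measurable_const.sub measurable_snd))).pow_const n
      have hψ : Measurable (fun t : ℝ => (1 - t) ^ n) :=
        (measurable_const.sub measurable_id).pow_const n
      exact hpair.comp hφ hψ
    have hfactor := hindep2.integral_mul_eq_mul_integral
      (hasm _ (by exact (measurable_const.sub (hY₃.mul (measurable_const.sub hR'))).pow_const n))
      (hasm _ ((measurable_const.sub hY₂).pow_const n))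
    have hfactor' : ∫ ω, (1 - Y₃ ω * (1 - R' ω)) ^ n * (1 - Y₂ ω) ^ n ∂μ
        = (∫ ω, (1 - Y₃ ω * (1 - R' ω)) ^ n ∂μ) * ∫ ω, (1 - Y₂ ω) ^ n ∂μ := hfactor
    rw [hfactor']
    -- second factor
    have hsecond : ∫ ω, (1 - Y₂ ω) ^ n ∂μ = poch (q+r) n / poch (p+(q+r)) n := by
      have : ∫ ω, (1 - Y₂ ω) ^ n ∂μ = ∫ t, (1-t) ^ n ∂(Measure.map Y₂ μ) := by
        rw [integral_map hY₂.aemeasurable]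
        exact (Continuous.aestronglyMeasurable (by continuity))
      rw [this, h2, betaMoment_one_sub_pow hp hqr]
    rw [hsecond]
    congr 1
    -- first factor : binomial expansion
    have hexp : ∀ ω, (1 - Y₃ ω * (1 - R' ω)) ^ n
        = ∑ k ∈ Finset.range (n+1), (-1:ℝ)^k * (n.choose k) * (Y₃ ω ^ k * (1 - R' ω) ^ k) := by
      intro ω
      rw [sub_eq_add_neg, add_comm, add_pow]
      apply Finset.sum_congr rfl
      intro k _
      rw [neg_pow, mul_pow, one_pow]
      ring
    simp_rw [hexp]
    have hterm_int : ∀ k : ℕ, k ∈ Finset.range (n+1) → Integrable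
        (fun ω => (-1:ℝ)^k * (n.choose k) * (Y₃ ω ^ k * (1 - R' ω) ^ k)) μ := by
      intro k _
      apply Integrable.mono' (integrable_const ((n.choose k : ℝ)))
      · exact (hasm _ ((hY₃.pow_const k).mul ((measurable_const.sub hR').pow_const k))).const_mul _
      · filter_upwards [hY₃mem, hR'mem] with ω h3m hRm
        have b1 : |Y₃ ω| ≤ 1 := by rw [abs_le]; constructor <;> nlinarith [h3m.1, h3m.2]
        have b2 : |1 - R' ω| ≤ 1 := by rw [abs_le]; constructor <;> nlinarith [hRm.1, hRm.2]
        rw [Real.norm_eq_abs, abs_mul, abs_mul, abs_mul, abs_pow, abs_pow, abs_pow, abs_neg,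
          abs_one, one_pow, one_mul, Nat.abs_cast]
        calc (n.choose k : ℝ) * (|Y₃ ω| ^ k * |1 - R' ω| ^ k)
            ≤ (n.choose k : ℝ) * (1 * 1) := by
              apply mul_le_mul_of_nonneg_left _ (by positivity)
              exact mul_le_mul (pow_le_one₀ (abs_nonneg _) b1) (pow_le_one₀ (abs_nonneg _) b2)
                (by positivity) (by norm_num)
          _ = (n.choose k : ℝ) := by ring
    rw [integral_finset_sum _ hterm_int]
    apply Finset.sum_congr rfl
    intro k _
    rw [integral_const_mul]
    congr 1
    have hIk : IndepFun (fun ω => Y₃ ω ^ k) (fun ω => (1 - R' ω) ^ k) μ :=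
      hY₃R'.comp (show Measurable (fun t : ℝ => t ^ k) from measurable_id.pow_const k)
        (show Measurable (fun t : ℝ => (1 - t) ^ k) from
          (measurable_const.sub measurable_id).pow_const k)
    have hfact2' : ∫ ω, Y₃ ω ^ k * (1 - R' ω) ^ k ∂μ
        = (∫ ω, Y₃ ω ^ k ∂μ) * ∫ ω, (1 - R' ω) ^ k ∂μ :=
      hIk.integral_mul_eq_mul_integral (hasm _ (hY₃.pow_const k)) (hasm _ ((measurable_const.sub hR').pow_const k))
    rw [hfact2']
    have e1 : ∫ ω, Y₃ ω ^ k ∂μ = poch r k / poch (r+q) k := by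
      have : ∫ ω, Y₃ ω ^ k ∂μ = ∫ t, t ^ k ∂(Measure.map Y₃ μ) := by
        rw [integral_map hY₃.aemeasurable]
        exact (Continuous.aestronglyMeasurable (by continuity))
      rw [this, h3, betaMoment_pow hr hq]
    have e2 : ∫ ω, (1 - R' ω) ^ k ∂μ = poch (q+r) k / poch ((p+r)+(q+r)) k := by
      have : ∫ ω, (1 - R' ω) ^ k ∂μ = ∫ t, (1-t) ^ k ∂(Measure.map R' μ) := by
        rw [integral_map hR'.aemeasurable]
        exact (Continuous.aestronglyMeasurable (by continuity))
      rw [this, hR'law, betaMoment_one_sub_pow hpr hqr]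
    rw [e1, e2]
  -- Step 2 : simplify the sum via Chu–Vandermonde
  have moment_W' : ∀ n : ℕ, ∫ ω, (W ω) ^ n ∂μ
      = poch (q+r) n / poch ((q+r)+(p+r)) n := by
    intro n
    rw [moment_W n]
    have hsum : (∑ k ∈ Finset.range (n+1), (-1:ℝ)^k * (n.choose k) *
          ((poch r k / poch (r+q) k) * (poch (q+r) k / poch ((p+r)+(q+r)) k)))
        = ∑ k ∈ Finset.range (n+1), (-1:ℝ)^k * (n.choose k) *
          (poch r k / poch ((p+r)+(q+r)) k) := by
      have hx : ∀ k : ℕ, (poch r k / poch (r+q) k) * (poch (q+r) k / poch ((p+r)+(q+r)) k)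
          = poch r k / poch ((p+r)+(q+r)) k := by
        intro k
        have e : r + q = q + r := by ring
        rw [e]
        have h1 : poch (q+r) k ≠ 0 := (poch_pos hqr k).ne'
        rw [div_mul_div_comm, mul_comm (poch r k) (poch (q+r) k),
          mul_div_mul_left _ _ h1]
      exact Finset.sum_congr rfl (fun k _ => by rw [hx k])
    rw [hsum, chu n r ((p+r)+(q+r)) (by linarith)]
    have e : (p+r)+(q+r) - r = p + (q+r) := by ring
    rw [e]
    have h1 : poch (p+(q+r)) n ≠ 0 := (poch_pos hpqr n).ne'
    have h2 : poch ((p+r)+(q+r)) n ≠ 0 := (poch_pos (by linarith) n).ne'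
    have e2 : (q+r)+(p+r) = (p+r)+(q+r) := by ring
    rw [e2]
    field_simp
  -- Step 3 : identify the law of W
  haveI : IsProbabilityMeasure (Measure.map W μ) :=
    Measure.isProbabilityMeasure_map hWmeas.aemeasurable
  haveI hprob1 : IsProbabilityMeasure (betaMeasureI (q+r) (p+r)) := betaMeasure_isProb hqr hpr
  have hlawW : Measure.map W μ = betaMeasureI (q+r) (p+r) := by
    apply moment_ext
    · rw [Measure.map_apply hWmeas measurableSet_Icc.compl]
      have hXae : ∀ᵐ ω ∂μ, W ω ∈ Set.Icc (0:ℝ) 1 := by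
        filter_upwards [hY₂mem, hY₃mem, hR'mem] with ω h2m h3m hRm
        have f1 : 0 < 1 - Y₂ ω := by linarith [h2m.2]
        have u1 : 1 - Y₂ ω < 1 := by linarith [h2m.1]
        have g1 : 0 < 1 - R' ω := by linarith [hRm.2]
        have g2 : 1 - R' ω < 1 := by linarith [hRm.1]
        have gp : 0 < Y₃ ω * (1 - R' ω) := mul_pos h3m.1 g1
        have gl : Y₃ ω * (1 - R' ω) < 1 := by nlinarith [h3m.1, h3m.2]
        have f2 : 0 < 1 - Y₃ ω * (1 - R' ω) := by linarith
        have u2 : 1 - Y₃ ω * (1 - R' ω) ≤ 1 := by linarith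
        constructor
        · exact (mul_pos f1 f2).le
        · exact mul_le_one₀ u1.le f2.le u2
      rw [show W ⁻¹' ((Set.Icc (0:ℝ) 1)ᶜ) = {ω | ¬ (W ω ∈ Set.Icc (0:ℝ) 1)} from rfl]
      exact MeasureTheory.ae_iff.mp hXae
    · exact betaMeasure_compl_Icc
    · intro n
      have : ∫ x, x ^ n ∂(Measure.map W μ) = ∫ ω, (W ω) ^ n ∂μ := by
        rw [integral_map hWmeas.aemeasurable]
        exact (Continuous.aestronglyMeasurable (by continuity))
      rw [this, moment_W' n, betaMoment_pow hqr hpr]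
  -- Step 4 : conclude via reflection
  have hZW : (fun ω => (-((1 - Y₂ ω) * Y₃ ω)) * R' ω + (Y₂ ω + (1 - Y₂ ω) * Y₃ ω))
      = (fun x : ℝ => 1 - x) ∘ W := by
    funext ω; simp only [Function.comp_apply, hW]; ring
  have hrefl : Measurable (fun x : ℝ => 1 - x) := measurable_const.sub measurable_id
  rw [hZW, ← Measure.map_map hrefl hWmeas, hlawW]
  -- remains : map (1 - ·) (betaMeasureI (q+r) (p+r)) = betaMeasureI (p+r) (q+r)
  haveI : IsProbabilityMeasure (betaMeasureI (p+r) (q+r)) := betaMeasure_isProb hpr hqr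
  haveI : IsProbabilityMeasure
      (Measure.map (fun x : ℝ => 1 - x) (betaMeasureI (q+r) (p+r))) :=
    Measure.isProbabilityMeasure_map ((measurable_const.sub measurable_id) :
      Measurable (fun x : ℝ => 1 - x)).aemeasurable
  apply moment_ext
  · rw [Measure.map_apply hrefl measurableSet_Icc.compl]
    apply measure_mono_null _ (betaMeasure_compl_Icc (a := q+r) (b := p+r))
    intro x hx
    simp only [Set.mem_preimage, Set.mem_compl_iff, Set.mem_Icc] at hx ⊢
    intro hmem
    exact hx ⟨by linarith [hmem.2], by linarith [hmem.1]⟩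
  · exact betaMeasure_compl_Icc
  · intro n
    have : ∫ x, x ^ n ∂(Measure.map (fun x : ℝ => 1 - x) (betaMeasureI (q+r) (p+r)))
        = ∫ t, (1-t) ^ n ∂(betaMeasureI (q+r) (p+r)) := by
      rw [integral_map hrefl.aemeasurable]
      exact (Continuous.aestronglyMeasurable (by continuity))
    rw [this, betaMoment_one_sub_pow hqr hpr, betaMoment_pow hpr hqr]
    have e : (q+r)+(p+r) = (p+r)+(q+r) := by ring
    rw [e]
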